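/- Define r : ℕ → ℕ by r(1) = 2 and, for d > 1, r(d) = 1 + min over partitions λ of d with at least two parts of r(λ), where r(λ) := ∑_{j=1}^{d-1} m_j(λ)·r(j) and m_j(λ) is the multiplicity of j in λ. Then for every d > 1 and every partition λ of d with at least two parts, r(λ) = 2d + |λ| - m_1(λ), where |λ| is the number of parts of λ. -/

import Mathlib

/-- `partitionSum r P` is `r(λ) = ∑_{j=1}^{d-1} m_j(λ) · r(j)` for a partition `P` of `d`. -/
def partitionSum (r : ℕ → ℕ) {d : ℕ} (P : Nat.Partition d) : ℕ :=
  ∑ j ∈ Finset.Icc 1 (d - 1), P.parts.count j * r j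

lemma parts_le_pred {d : ℕ} (P : Nat.Partition d) (hP : 2 ≤ P.parts.card)
    {j : ℕ} (hj : j ∈ P.parts) : j ≤ d - 1 := by
  obtain ⟨t, ht⟩ := Multiset.exists_cons_of_mem hj
  have hsum : j + t.sum = d := by
    have h := P.parts_sum; rw [ht, Multiset.sum_cons] at h; exact h
  have hcard : 1 ≤ Multiset.card t := by
    have h := hP; rw [ht, Multiset.card_cons] at h; omega
  obtain ⟨k, hk⟩ := Multiset.card_pos_iff_exists_mem.mp (show 0 < Multiset.card t by omega)
  have hkpos : 0 < k := P.parts_pos (by rw [ht]; exact Multiset.mem_cons_of_mem hk)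
  have hkle : k ≤ t.sum := Multiset.single_le_sum (fun x _ => Nat.zero_le x) _ hk
  omega

lemma two_le_d {d : ℕ} (P : Nat.Partition d) (hP : 2 ≤ P.parts.card) : 2 ≤ d := by
  obtain ⟨j, hj⟩ := Multiset.card_pos_iff_exists_mem.mp (by omega : 0 < Multiset.card P.parts)
  have hj1 : 1 ≤ j := P.parts_pos hj
  have := parts_le_pred P hP hj
  omega

lemma aux_sum (r : ℕ → ℕ) (h1 : r 1 = 2) {d : ℕ}
    (hr2 : ∀ j, 2 ≤ j → j ≤ d - 1 → r j = 2 * j + 1)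
    (P : Nat.Partition d) (hP : 2 ≤ P.parts.card) :
    partitionSum r P + P.parts.count 1 = 2 * d + Multiset.card P.parts := by
  have hd2 : 2 ≤ d := two_le_d P hP
  have hsub : P.parts.toFinset ⊆ Finset.Icc 1 (d - 1) := by
    intro j hj
    rw [Multiset.mem_toFinset] at hj
    exact Finset.mem_Icc.mpr ⟨P.parts_pos hj, parts_le_pred P hP hj⟩
  have hgen : ∀ f : ℕ → ℕ, ∑ j ∈ Finset.Icc 1 (d-1), P.parts.count j * f j
      = ∑ j ∈ P.parts.toFinset, P.parts.count j * f j := by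
    intro f
    refine (Finset.sum_subset hsub ?_).symm
    intro x _ hx
    rw [Multiset.mem_toFinset] at hx
    simp [Multiset.count_eq_zero_of_notMem hx]
  have hcard : ∑ j ∈ Finset.Icc 1 (d-1), P.parts.count j * 1 = Multiset.card P.parts := by
    rw [hgen]; simpa using Multiset.toFinset_sum_count_eq P.parts
  have hsum : ∑ j ∈ Finset.Icc 1 (d-1), P.parts.count j * j = d := by
    rw [hgen]
    have := Finset.sum_multiset_count P.parts
    rw [P.parts_sum] at this
    simpa [smul_eq_mul] using this.symm
  -- now relate partitionSum to the (2j+1) sum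
  have h1mem : 1 ∈ Finset.Icc 1 (d-1) := Finset.mem_Icc.mpr ⟨le_refl 1, by omega⟩
  have key : partitionSum r P + P.parts.count 1
      = ∑ j ∈ Finset.Icc 1 (d-1), P.parts.count j * (2 * j + 1) := by
    unfold partitionSum
    rw [← Finset.add_sum_erase _ _ h1mem, ← Finset.add_sum_erase _ (fun j => P.parts.count j * (2*j+1)) h1mem]
    have herase : ∑ j ∈ (Finset.Icc 1 (d-1)).erase 1, P.parts.count j * r j
        = ∑ j ∈ (Finset.Icc 1 (d-1)).erase 1, P.parts.count j * (2 * j + 1) := by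
      refine Finset.sum_congr rfl ?_
      intro x hx
      have hx1 := Finset.mem_of_mem_erase hx
      have hxne := Finset.ne_of_mem_erase hx
      rw [Finset.mem_Icc] at hx1
      rw [hr2 x (by omega) hx1.2]
    rw [herase, h1]
    ring
  rw [key]
  have expand : ∑ j ∈ Finset.Icc 1 (d-1), P.parts.count j * (2 * j + 1)
      = 2 * (∑ j ∈ Finset.Icc 1 (d-1), P.parts.count j * j)
        + ∑ j ∈ Finset.Icc 1 (d-1), P.parts.count j * 1 := by
    rw [Finset.mul_sum, ← Finset.sum_add_distrib]
    refine Finset.sum_congr rfl fun x _ => by ring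
  rw [expand, hsum, hcard]

/-- the all-ones partition -/
def allOnes (d : ℕ) : Nat.Partition d where
  parts := Multiset.replicate d 1
  parts_pos := by intro i hi; rw [Multiset.eq_of_mem_replicate hi]; norm_num
  parts_sum := by simp [Multiset.sum_replicate]

lemma r_eq (r : ℕ → ℕ) (h1 : r 1 = 2)
    (hrec : ∀ d, 1 < d →
      r d = 1 + sInf {s | ∃ P : Nat.Partition d, 2 ≤ P.parts.card ∧ s = partitionSum r P}) :
    ∀ d, 1 < d → r d = 2 * d + 1 := by
  intro d
  induction d using Nat.strong_induction_on with
  | _ d ih =>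
    intro hd
    have hr2 : ∀ j, 2 ≤ j → j ≤ d - 1 → r j = 2 * j + 1 := fun j h2 hle =>
      ih j (by omega) (by omega)
    rw [hrec d hd]
    have hQcard : Multiset.card (allOnes d).parts = d := by
      simp [allOnes]
    have hQcount : (allOnes d).parts.count 1 = d := by
      simp [allOnes]
    have hQsum : partitionSum r (allOnes d) = 2 * d := by
      have := aux_sum r h1 hr2 (allOnes d) (by omega)
      omega
    have hmem : 2 * d ∈ {s | ∃ P : Nat.Partition d, 2 ≤ P.parts.card ∧ s = partitionSum r P} :=
      ⟨allOnes d, by omega, hQsum.symm⟩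
    have hlb : ∀ s ∈ {s | ∃ P : Nat.Partition d, 2 ≤ P.parts.card ∧ s = partitionSum r P},
        2 * d ≤ s := by
      rintro s ⟨P, hPc, rfl⟩
      have := aux_sum r h1 hr2 P hPc
      have := Multiset.count_le_card 1 P.parts
      omega
    have : sInf {s | ∃ P : Nat.Partition d, 2 ≤ P.parts.card ∧ s = partitionSum r P} = 2 * d :=
      le_antisymm (Nat.sInf_le hmem) (le_csInf ⟨_, hmem⟩ hlb)
    omega

theorem stmt_5 (r : ℕ → ℕ) (h1 : r 1 = 2)
    (hrec : ∀ d, 1 < d →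
      r d = 1 + sInf {s | ∃ P : Nat.Partition d, 2 ≤ P.parts.card ∧ s = partitionSum r P})
    (d : ℕ) (hd : 1 < d) (P : Nat.Partition d) (hP : 2 ≤ P.parts.card) :
    partitionSum r P = 2 * d + P.parts.card - P.parts.count 1 := by
  have hr2 : ∀ j, 2 ≤ j → j ≤ d - 1 → r j = 2 * j + 1 := fun j h2 hle =>
    r_eq r h1 hrec j (by omega)
  have := aux_sum r h1 hr2 P hP
  have := Multiset.count_le_card 1 P.parts
  omega
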